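/- arXiv:1709.00703 — 5 statements merged into one kernel-verified Lean document; each statement's English description precedes it below -/
import Mathlib

section
/- Let A : ℝ → ℝ be Lipschitz with constant L, let p ∈ (1,∞), and let b ∈ L^q_loc(ℝ) for some q ∈ (1,∞). If the commutator [b, C_Γ] is bounded on L^p(ℝ), then b ∈ BMO(ℝ), and there is a constant C₂ (depending only on p and L) such that ‖b‖_{BMO} ≤ C₂‖[b,C_Γ]‖_{L^p(ℝ)→L^p(ℝ)}. -/
open MeasureTheory Filter Set
open scoped ENNReal

/-- The Cauchy kernel `K(x,y) = 1/(y - x + i(A(y) - A(x)))` associated to `A`. -/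
noncomputable def cauchyKernel (A : ℝ → ℝ) (x y : ℝ) : ℂ :=
  ((y : ℂ) - (x : ℂ) + Complex.I * ((A y : ℂ) - (A x : ℂ)))⁻¹

/-- `cauchyPV A f x v` : the principal value `C_Γ f (x)` exists and equals `v`. -/
def cauchyPV (A : ℝ → ℝ) (f : ℝ → ℂ) (x : ℝ) (v : ℂ) : Prop :=
  Filter.Tendsto (fun δ : ℝ => ∫ y in {y : ℝ | δ < |y - x|}, cauchyKernel A x y * f y)
    (nhdsWithin 0 (Set.Ioi 0)) (nhds v)

/-- `g` agrees a.e. with the commutator `[b, C_Γ] f = b • C_Γ f - C_Γ (b f)`. -/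
def IsCommutatorFn (A b : ℝ → ℝ) (f g : ℝ → ℂ) : Prop :=
  ∀ᵐ x : ℝ, ∃ u w : ℂ,
    cauchyPV A f x u ∧ cauchyPV A (fun y => (b y : ℂ) * f y) x w ∧
    g x = (b x : ℂ) * u - w

/-- Average of `b` over the interval `I(x,r) = (x - r, x + r)`. -/
noncomputable def intervalAvg (b : ℝ → ℝ) (x r : ℝ) : ℝ :=
  (2 * r)⁻¹ * ∫ y in Set.Ioo (x - r) (x + r), b y

/-- Mean oscillation `M(b, I(x,r))`. -/
noncomputable def meanOsc (b : ℝ → ℝ) (x r : ℝ) : ℝ :=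
  (2 * r)⁻¹ * ∫ y in Set.Ioo (x - r) (x + r), |b y - intervalAvg b x r|

def IsBMOWith (b : ℝ → ℝ) (N : ℝ) : Prop :=
  MeasureTheory.LocallyIntegrable b volume ∧ ∀ x r : ℝ, 0 < r → meanOsc b x r ≤ N

/-- `b ∈ BMO(ℝ)`. -/
def IsBMO (b : ℝ → ℝ) : Prop := ∃ N : ℝ, IsBMOWith b N

/-- `‖b‖_BMO`, the supremum of the mean oscillations of `b` over all bounded intervals. -/
noncomputable def bmoNorm (b : ℝ → ℝ) : ℝ := sInf {N : ℝ | IsBMOWith b N}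


lemma exists_median (μ : Measure ℝ) [IsFiniteMeasure μ] {b : ℝ → ℝ} (hb : Measurable b)
    {r : ℝ} (hr : 0 < r) (hμ : μ Set.univ = ENNReal.ofReal (2*r)) :
    ∃ m : ℝ, ENNReal.ofReal r ≤ μ {y | m ≤ b y} ∧ ENNReal.ofReal r ≤ μ {y | b y ≤ m} := by
  set T : Set ℝ := {t | μ {y | b y < t} ≤ ENNReal.ofReal r} with hT
  have hmeas : ∀ t : ℝ, MeasurableSet {y | b y < t} := fun t => hb measurableSet_Iio
  have hmono : ∀ {s t : ℝ}, s ≤ t → μ {y | b y < s} ≤ μ {y | b y < t} :=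
    fun h => measure_mono (fun y hy => lt_of_lt_of_le hy h)
  -- T is nonempty
  have hne : T.Nonempty := by
    have h0 : Tendsto (fun n : ℕ => μ {y | b y < -(n:ℝ)}) atTop
        (nhds (μ (⋂ n : ℕ, {y | b y < -(n:ℝ)}))) := by
      have := tendsto_measure_iInter_atTop (μ := μ) (s := fun n : ℕ => {y | b y < -(n:ℝ)})
        (fun n => (hmeas _).nullMeasurableSet)
        (fun n k hnk => fun y hy => by
          have hc : (n:ℝ) ≤ (k:ℝ) := Nat.cast_le.mpr hnk
          exact show b y < _ from lt_of_lt_of_le hy (by linarith))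
        ⟨0, measure_ne_top μ _⟩
      exact this
    have hempty : (⋂ n : ℕ, {y : ℝ | b y < -(n:ℝ)}) = ∅ := by
      ext y
      simp only [Set.mem_iInter, Set.mem_setOf_eq, Set.mem_empty_iff_false, iff_false, not_forall,
        not_lt]
      obtain ⟨n, hn⟩ := exists_nat_gt (-(b y))
      exact ⟨n, by linarith⟩
    rw [hempty, measure_empty] at h0
    have := h0.eventually_lt_const (ENNReal.ofReal_pos.mpr hr)
    obtain ⟨n, hn⟩ := this.exists
    exact ⟨-(n:ℝ), hn.le⟩
  -- T is bounded above
  have hbdd : BddAbove T := by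
    have h1 : Tendsto (fun n : ℕ => μ {y | b y < (n:ℝ)}) atTop
        (nhds (μ (⋃ n : ℕ, {y : ℝ | b y < (n:ℝ)}))) := by
      have := tendsto_measure_iUnion_atTop (μ := μ) (s := fun n : ℕ => {y | b y < (n:ℝ)})
        (fun n k hnk y hy => show b y < _ from lt_of_lt_of_le hy (Nat.cast_le.mpr hnk))
      exact this
    have huniv : (⋃ n : ℕ, {y : ℝ | b y < (n:ℝ)}) = Set.univ := by
      ext y
      simp only [Set.mem_iUnion, Set.mem_setOf_eq, Set.mem_univ, iff_true]
      obtain ⟨n, hn⟩ := exists_nat_gt (b y)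
      exact ⟨n, hn⟩
    rw [huniv, hμ] at h1
    have := h1.eventually_const_lt (ENNReal.ofReal_lt_ofReal_iff (by linarith) |>.mpr (by linarith))
    obtain ⟨n, hn⟩ := this.exists
    refine ⟨(n:ℝ), fun t ht => ?_⟩
    by_contra hc
    push_neg at hc
    exact absurd (le_trans (hmono hc.le) ht) (not_le.mpr hn)
  set m := sSup T with hm
  refine ⟨m, ?_, ?_⟩
  · -- μ {y | b y < m} ≤ r, hence μ {m ≤ b} ≥ r
    obtain ⟨u, humono, hulim, huT⟩ := exists_seq_tendsto_sSup hne hbdd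
    have hcup : {y : ℝ | b y < m} = ⋃ n, {y | b y < u n} := by
      ext y
      simp only [Set.mem_setOf_eq, Set.mem_iUnion]
      constructor
      · intro hy
        exact (hulim.eventually (eventually_gt_nhds hy)).exists
      · rintro ⟨n, hn⟩
        exact lt_of_lt_of_le hn (le_csSup hbdd (huT n))
    have hlt : μ {y | b y < m} ≤ ENNReal.ofReal r := by
      have h2 : Tendsto (fun n : ℕ => μ {y | b y < u n}) atTop (nhds (μ {y | b y < m})) := by
        rw [hcup]
        exact tendsto_measure_iUnion_atTop (fun n k hnk y hy => lt_of_lt_of_le hy (humono hnk))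
      exact le_of_tendsto h2 (Filter.Eventually.of_forall fun n => huT n)
    have hcompl : {y : ℝ | m ≤ b y} = {y : ℝ | b y < m}ᶜ := by
      ext y; simp [not_lt]
    rw [hcompl, measure_compl (hmeas m) (measure_ne_top μ _), hμ]
    calc ENNReal.ofReal r = ENNReal.ofReal (2*r) - ENNReal.ofReal r := by
          rw [← ENNReal.ofReal_sub _ hr.le]; norm_num; ring_nf
      _ ≤ ENNReal.ofReal (2*r) - μ {y | b y < m} := tsub_le_tsub_left hlt _
  · -- μ {b ≤ m} ≥ r
    have hcap : {y : ℝ | b y ≤ m} = ⋂ n : ℕ, {y | b y < m + ((n:ℝ)+1)⁻¹} := by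
      ext y
      simp only [Set.mem_setOf_eq, Set.mem_iInter]
      constructor
      · intro hy n
        have : (0:ℝ) < ((n:ℝ)+1)⁻¹ := by positivity
        linarith
      · intro h
        by_contra hc
        push_neg at hc
        obtain ⟨n, hn⟩ := exists_nat_one_div_lt (show (0:ℝ) < b y - m by linarith)
        have := h n
        rw [one_div] at hn
        linarith
    have h3 : Tendsto (fun n : ℕ => μ {y | b y < m + ((n:ℝ)+1)⁻¹}) atTop
        (nhds (μ {y | b y ≤ m})) := by
      rw [hcap]
      refine tendsto_measure_iInter_atTop (fun n => (hmeas _).nullMeasurableSet)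
        (fun n k hnk y hy => show b y < _ from lt_of_lt_of_le hy ?_) ⟨0, measure_ne_top μ _⟩
      have : ((k:ℝ)+1)⁻¹ ≤ ((n:ℝ)+1)⁻¹ := by
        have hc : (n:ℝ) ≤ (k:ℝ) := Nat.cast_le.mpr hnk
        apply inv_anti₀ (by positivity)
        linarith
      linarith
    refine ge_of_tendsto h3 (Filter.Eventually.of_forall fun n => ?_)
    have hnotT : m + ((n:ℝ)+1)⁻¹ ∉ T := by
      intro hmem
      have := le_csSup hbdd hmem
      have hpos : (0:ℝ) < ((n:ℝ)+1)⁻¹ := by positivity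
      linarith
    exact (not_le.mp hnotT).le


lemma kernel_bounds {A : ℝ → ℝ} {L : ℝ} (hL : 0 < L)
    (hA : ∀ x₁ x₂ : ℝ, |A x₁ - A x₂| ≤ L * |x₁ - x₂|)
    {x₀ r x y : ℝ} (hr : 0 < r) (hx : x ∈ Set.Ioo (x₀ - r) (x₀ + r))
    (hy : y ∈ Set.Ioo (x₀ + 3*r) (x₀ + 5*r)) :
    (6*(1+L^2)*r)⁻¹ ≤ (cauchyKernel A x y).re ∧ ‖cauchyKernel A x y‖ ≤ (2*r)⁻¹ := by
  obtain ⟨hx1, hx2⟩ := hx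
  obtain ⟨hy1, hy2⟩ := hy
  have hD1 : 2*r < y - x := by linarith
  have hD2 : y - x < 6*r := by linarith
  have hDpos : 0 < y - x := by linarith
  set z : ℂ := (y : ℂ) - (x : ℂ) + Complex.I * ((A y : ℂ) - (A x : ℂ)) with hz
  have hre : z.re = y - x := by simp [hz]
  have him : z.im = A y - A x := by simp [hz]
  have hnormSq : Complex.normSq z = (y-x)^2 + (A y - A x)^2 := by
    rw [Complex.normSq_apply, hre, him]; ring
  have hAbd : (A y - A x)^2 ≤ L^2 * (y-x)^2 := by
    have h1 : |A y - A x| ≤ L * (y - x) := by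
      have := hA y x
      rwa [abs_of_pos hDpos] at this
    have h2 : (A y - A x)^2 ≤ (L * (y-x))^2 := by
      rw [← sq_abs (A y - A x)]
      exact pow_le_pow_left₀ (abs_nonneg _) h1 2
    nlinarith
  have hnsq_le : Complex.normSq z ≤ (1 + L^2) * (y-x)^2 := by rw [hnormSq]; nlinarith
  have hnsq_pos : 0 < Complex.normSq z := by rw [hnormSq]; nlinarith
  have hL2 : (0:ℝ) < 1 + L^2 := by nlinarith
  constructor
  · have hKre : (cauchyKernel A x y).re = (y - x) / Complex.normSq z := by
      rw [cauchyKernel, ← hz, Complex.inv_re, hre]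
    rw [hKre, le_div_iff₀ hnsq_pos]
    calc (6*(1+L^2)*r)⁻¹ * Complex.normSq z
        ≤ (6*(1+L^2)*r)⁻¹ * ((1+L^2) * (y-x)^2) := by
          apply mul_le_mul_of_nonneg_left hnsq_le (by positivity)
      _ ≤ y - x := by
          rw [← sub_nonneg]
          have hkey : y - x - (6*(1+L^2)*r)⁻¹ * ((1+L^2) * (y-x)^2)
              = (y-x) * (1 - (y-x)/(6*r)) := by
            field_simp
          rw [hkey]
          apply mul_nonneg hDpos.le
          rw [sub_nonneg, div_le_one (by positivity)]
          linarith
  · rw [cauchyKernel, ← hz, norm_inv]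
    have hz_norm : 2*r ≤ ‖z‖ := by
      calc 2*r ≤ |z.re| := by rw [hre, abs_of_pos hDpos]; linarith
        _ ≤ ‖z‖ := Complex.abs_re_le_norm z
        _ = ‖z‖ := rfl
    have h2r : (0:ℝ) < 2*r := by linarith
    exact inv_anti₀ h2r hz_norm

lemma pv_eval {A : ℝ → ℝ} {f : ℝ → ℂ} {x : ℝ} {u : ℂ} {E : Set ℝ} (hE : MeasurableSet E)
    {ε : ℝ} (hε : 0 < ε) (hsep : ∀ y ∈ E, ε ≤ |y - x|) (hsupp : ∀ y, y ∉ E → f y = 0)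
    (h : cauchyPV A f x u) : u = ∫ y in E, cauchyKernel A x y * f y := by
  have key : ∀ δ ∈ Set.Ioo (0:ℝ) ε,
      (∫ y in {y : ℝ | δ < |y - x|}, cauchyKernel A x y * f y)
        = ∫ y in E, cauchyKernel A x y * f y := by
    intro δ hδ
    have h1 : (fun y => cauchyKernel A x y * f y)
        = E.indicator (fun y => cauchyKernel A x y * f y) := by
      funext y
      by_cases hy : y ∈ E
      · rw [Set.indicator_of_mem hy]
      · rw [Set.indicator_of_notMem hy, hsupp y hy, mul_zero]
    have hEsub : E ⊆ {y : ℝ | δ < |y - x|} := fun y hy => lt_of_lt_of_le hδ.2 (hsep y hy)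
    rw [h1, MeasureTheory.setIntegral_indicator hE,
      Set.inter_eq_self_of_subset_right hEsub, MeasureTheory.setIntegral_indicator hE,
      Set.inter_self]
  have heq : (fun δ : ℝ => ∫ y in {y : ℝ | δ < |y - x|}, cauchyKernel A x y * f y)
      =ᶠ[nhdsWithin 0 (Set.Ioi 0)] (fun _ => ∫ y in E, cauchyKernel A x y * f y) := by
    filter_upwards [Ioo_mem_nhdsGT_of_mem (show (0:ℝ) ∈ Set.Ico 0 ε from ⟨le_refl _, hε⟩)]
      with δ hδ using key δ hδ
  exact tendsto_nhds_unique ((Filter.Tendsto.congr' heq) h) tendsto_const_nhds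

set_option maxHeartbeats 2000000 in
lemma osc_bound (A : ℝ → ℝ) (L : ℝ) (hL : 0 < L)
    (hA : ∀ x₁ x₂ : ℝ, |A x₁ - A x₂| ≤ L * |x₁ - x₂|)
    (p : ℝ≥0∞) (hp1 : 1 < p) (hp2 : p ≠ ⊤)
    (b : ℝ → ℝ) (hbloc : MeasureTheory.LocallyIntegrable b volume)
    (C : ℝ) (hC : 0 ≤ C)
    (hbound : ∀ f : ℝ → ℂ, MemLp f p volume →
      ∃ g : ℝ → ℂ, IsCommutatorFn A b f g ∧
        eLpNorm g p volume ≤ ENNReal.ofReal C * eLpNorm f p volume)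
    (x₀ r : ℝ) (hr : 0 < r) : meanOsc b x₀ r ≤ 24*(1+L^2)*C := by
  have hAcont : Continuous A := by
    have : LipschitzWith (Real.toNNReal L) A := by
      apply LipschitzWith.of_dist_le_mul
      intro a c
      rw [Real.dist_eq, Real.dist_eq, Real.coe_toNNReal L hL.le]
      exact hA a c
    exact this.continuous
  have hKjoint : Measurable (fun q : ℝ × ℝ => cauchyKernel A q.1 q.2) := by
    apply Measurable.inv
    apply Continuous.measurable
    exact ((Complex.continuous_ofReal.comp continuous_snd).sub
        (Complex.continuous_ofReal.comp continuous_fst)).add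
      (continuous_const.mul ((Complex.continuous_ofReal.comp (hAcont.comp continuous_snd)).sub
        (Complex.continuous_ofReal.comp (hAcont.comp continuous_fst))))
  have hKy : ∀ x : ℝ, Measurable (fun y => cauchyKernel A x y) :=
    fun x => hKjoint.comp (measurable_const.prodMk measurable_id)
  set I : Set ℝ := Set.Ioo (x₀ - r) (x₀ + r) with hI
  set J : Set ℝ := Set.Ioo (x₀ + 3*r) (x₀ + 5*r) with hJ
  have hIvol : volume I = ENNReal.ofReal (2*r) := by
    rw [hI, Real.volume_Ioo]; congr 1; ring
  have hJvol : volume J = ENNReal.ofReal (2*r) := by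
    rw [hJ, Real.volume_Ioo]; congr 1; ring
  have h2r : (0:ℝ) < 2*r := by linarith
  have hIfin : volume I < ⊤ := by rw [hIvol]; exact ENNReal.ofReal_lt_top
  have hJfin : volume J < ⊤ := by rw [hJvol]; exact ENNReal.ofReal_lt_top
  have hbm : AEStronglyMeasurable b volume := hbloc.aestronglyMeasurable
  set b' : ℝ → ℝ := hbm.mk b with hb'def
  have hb' : Measurable b' := hbm.stronglyMeasurable_mk.measurable
  have hbb' : b =ᵐ[volume] b' := hbm.ae_eq_mk
  have hbJint : IntegrableOn b J volume :=
    (hbloc.integrableOn_isCompact isCompact_Icc).mono_set Set.Ioo_subset_Icc_self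
  have hbIint : IntegrableOn b I volume :=
    (hbloc.integrableOn_isCompact isCompact_Icc).mono_set Set.Ioo_subset_Icc_self
  -- median
  haveI hJfm : IsFiniteMeasure (volume.restrict J) :=
    ⟨by rw [Measure.restrict_apply_univ]; exact hJfin⟩
  obtain ⟨m, hm1, hm2⟩ := exists_median (volume.restrict J) hb' hr
    (by rw [Measure.restrict_apply_univ]; exact hJvol)
  set E₁ : Set ℝ := {y | m ≤ b' y} ∩ J with hE₁def
  set E₂ : Set ℝ := {y | b' y ≤ m} ∩ J with hE₂def
  have hE₁m : MeasurableSet E₁ := (hb' measurableSet_Ici).inter measurableSet_Ioo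
  have hE₂m : MeasurableSet E₂ := (hb' measurableSet_Iic).inter measurableSet_Ioo
  have hE₁J : E₁ ⊆ J := Set.inter_subset_right
  have hE₂J : E₂ ⊆ J := Set.inter_subset_right
  have hE₁vol : ENNReal.ofReal r ≤ volume E₁ :=
    le_trans hm1 (le_of_eq (Measure.restrict_apply (hb' measurableSet_Ici)))
  have hE₂vol : ENNReal.ofReal r ≤ volume E₂ :=
    le_trans hm2 (le_of_eq (Measure.restrict_apply (hb' measurableSet_Iic)))
  -- main construction for a measurable subset of J
  have main : ∀ E : Set ℝ, MeasurableSet E → E ⊆ J →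
      ∃ g : ℝ → ℂ, AEStronglyMeasurable g (volume.restrict I) ∧
        eLpNorm g p (volume.restrict I) ≤
          ENNReal.ofReal C * ENNReal.ofReal (2*r) ^ (1/p.toReal) ∧
        (∀ᵐ x ∂(volume.restrict I),
          IntegrableOn (fun y => (b x - b y) * (cauchyKernel A x y).re) E volume ∧
          (g x).re = ∫ y in E, (b x - b y) * (cauchyKernel A x y).re) := by
    intro E hEm hEJ
    have hEfin : volume E < ⊤ := lt_of_le_of_lt (measure_mono hEJ) hJfin
    set f : ℝ → ℂ := E.indicator (fun _ => (1:ℂ)) with hfdef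
    have hfmem : MemLp f p volume := memLp_indicator_const p hEm 1 (Or.inr hEfin.ne)
    obtain ⟨g, hgcomm, hgb⟩ := hbound f hfmem
    have hKint : ∀ x ∈ I, IntegrableOn (fun y => cauchyKernel A x y) E volume := by
      intro x hx
      refine Integrable.mono' (g := fun _ => (2*r)⁻¹)
        (integrableOn_const hEfin.ne) ((hKy x).aestronglyMeasurable) ?_
      filter_upwards [ae_restrict_mem hEm] with y hy
      exact (kernel_bounds hL hA hr hx (hEJ hy)).2
    have hKbint : ∀ x ∈ I, IntegrableOn (fun y => cauchyKernel A x y * (b y : ℂ)) E volume := by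
      intro x hx
      refine Integrable.mono' (g := fun y => (2*r)⁻¹ * |b y|)
        (((hbJint.mono_set hEJ).abs.const_mul _))
        (((hKy x).aestronglyMeasurable).mul
          (Complex.continuous_ofReal.comp_aestronglyMeasurable (hbm.restrict))) ?_
      filter_upwards [ae_restrict_mem hEm] with y hy
      rw [norm_mul, Complex.norm_real, Real.norm_eq_abs]
      exact mul_le_mul_of_nonneg_right (kernel_bounds hL hA hr hx (hEJ hy)).2 (abs_nonneg _)
    have hae : ∀ᵐ x ∂(volume.restrict I),
        g x = ∫ y in E, ((b x : ℂ) - (b y : ℂ)) * cauchyKernel A x y := by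
      filter_upwards [ae_restrict_mem (show MeasurableSet I from measurableSet_Ioo),
        MeasureTheory.ae_restrict_of_ae hgcomm] with x hxI hx
      obtain ⟨u, w, hu, hw, hg⟩ := hx
      have hsep : ∀ y ∈ E, 2*r ≤ |y - x| := by
        intro y hy
        obtain ⟨h1, h2⟩ := hEJ hy
        obtain ⟨h3, h4⟩ := hxI
        rw [abs_of_pos (by linarith)]; linarith
      have hu' : u = ∫ y in E, cauchyKernel A x y := by
        rw [pv_eval hEm h2r hsep (fun y hy => Set.indicator_of_notMem hy _) hu]
        apply setIntegral_congr_fun hEm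
        intro y hy
        simp [hfdef, Set.indicator_of_mem hy]
      have hw' : w = ∫ y in E, cauchyKernel A x y * (b y : ℂ) := by
        rw [pv_eval hEm h2r hsep
          (fun y hy => by rw [hfdef, Set.indicator_of_notMem hy, mul_zero]) hw]
        apply setIntegral_congr_fun hEm
        intro y hy
        simp [hfdef, Set.indicator_of_mem hy]
      rw [hg, hu', hw', ← integral_const_mul,
        ← integral_sub ((hKint x hxI).const_mul _) (hKbint x hxI)]
      apply setIntegral_congr_fun hEm
      intro y _
      ring
    have hintC : ∀ x ∈ I,
        IntegrableOn (fun y => ((b x : ℂ) - (b y : ℂ)) * cauchyKernel A x y) E volume := by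
      intro x hx
      apply (((hKint x hx).const_mul ((b x : ℂ))).sub (hKbint x hx)).congr
      apply Filter.Eventually.of_forall
      intro y
      simp only [Pi.sub_apply]
      ring
    have hU : StronglyMeasurable (fun x : ℝ => ∫ y in E, cauchyKernel A x y) :=
      MeasureTheory.StronglyMeasurable.integral_prod_right
        (f := fun x y => cauchyKernel A x y) hKjoint.stronglyMeasurable
    have hW : StronglyMeasurable (fun x : ℝ => ∫ y in E, cauchyKernel A x y * (b' y : ℂ)) := by
      apply MeasureTheory.StronglyMeasurable.integral_prod_right
        (f := fun x y => cauchyKernel A x y * (b' y : ℂ))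
      exact (hKjoint.mul ((Complex.measurable_ofReal.comp (hb'.comp measurable_snd)))).stronglyMeasurable
    have hWW : ∀ x : ℝ, ∫ y in E, cauchyKernel A x y * (b y : ℂ)
        = ∫ y in E, cauchyKernel A x y * (b' y : ℂ) := by
      intro x
      apply integral_congr_ae
      filter_upwards [ae_restrict_of_ae hbb'] with y hy
      rw [hy]
    have hgm : AEStronglyMeasurable g (volume.restrict I) := by
      apply AEStronglyMeasurable.congr
        (f := fun x => (b x : ℂ) * (∫ y in E, cauchyKernel A x y)
          - ∫ y in E, cauchyKernel A x y * (b' y : ℂ))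
      · exact ((Complex.continuous_ofReal.comp_aestronglyMeasurable (hbm.restrict)).mul
          hU.aestronglyMeasurable).sub hW.aestronglyMeasurable
      · filter_upwards [hae, ae_restrict_mem (show MeasurableSet I from measurableSet_Ioo)]
          with x hx hxI
        rw [hx, ← hWW x, ← integral_const_mul,
          ← integral_sub ((hKint x hxI).const_mul _) (hKbint x hxI)]
        apply setIntegral_congr_fun hEm
        intro y _
        ring
    refine ⟨g, hgm, ?_, ?_⟩
    · refine le_trans (eLpNorm_mono_measure g Measure.restrict_le_self) (le_trans hgb ?_)
      apply mul_le_mul_right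
      rw [hfdef, eLpNorm_indicator_const hEm (by positivity) hp2]
      simp only [enorm_one, one_mul]
      exact ENNReal.rpow_le_rpow (le_trans (measure_mono hEJ) (le_of_eq hJvol)) (by positivity)
    · filter_upwards [hae, ae_restrict_mem (show MeasurableSet I from measurableSet_Ioo)]
        with x hx hxI
      have hint : Integrable (fun y => ((b x : ℂ) - (b y : ℂ)) * cauchyKernel A x y)
          (volume.restrict E) := hintC x hxI
      have hintre : IntegrableOn (fun y => (b x - b y) * (cauchyKernel A x y).re) E volume := by
        apply hint.re.congr
        apply Filter.Eventually.of_forall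
        intro y
        have hcast : ((b x : ℂ) - (b y : ℂ)) = ((b x - b y : ℝ) : ℂ) := by push_cast; ring
        simp only [hcast, RCLike.re_to_complex, Complex.re_ofReal_mul]
      refine ⟨hintre, ?_⟩
      rw [hx]
      have h2 := integral_re hint
      simp only [RCLike.re_to_complex] at h2
      rw [← h2]
      apply setIntegral_congr_fun hEm
      intro y _
      have hcast : ((b x : ℂ) - (b y : ℂ)) = ((b x - b y : ℝ) : ℂ) := by push_cast; ring
      simp only [hcast, Complex.re_ofReal_mul]
  obtain ⟨g₁, hg₁m, hg₁n, hg₁re⟩ := main E₁ hE₁m hE₁J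
  obtain ⟨g₂, hg₂m, hg₂n, hg₂re⟩ := main E₂ hE₂m hE₂J
  have hκpos : (0:ℝ) < 6*(1+L^2) := by positivity
  have hcpos : (0:ℝ) < (6*(1+L^2)*r)⁻¹ := by positivity
  -- pointwise bound
  have hptwise : ∀ᵐ x ∂(volume.restrict I),
      |b x - m| ≤ 6*(1+L^2) * (‖g₁ x‖ + ‖g₂ x‖) := by
    filter_upwards [hg₁re, hg₂re, ae_restrict_mem (show MeasurableSet I from measurableSet_Ioo)]
      with x h1 h2 hxI
    obtain ⟨hint1, h1⟩ := h1
    obtain ⟨hint2, h2⟩ := h2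
    have habs_re₁ : -(g₁ x).re ≤ ‖g₁ x‖ := by
      have := Complex.abs_re_le_norm (g₁ x)
      rw [abs_le] at this
      linarith [this.1]
    have habs_re₂ : (g₂ x).re ≤ ‖g₂ x‖ := by
      have := Complex.abs_re_le_norm (g₂ x)
      rw [abs_le] at this
      linarith [this.2]
    rcases le_total (b x) m with hbm' | hbm'
    · -- use g₁ : on E₁, b y ≥ m ≥ b x
      have hvol₁ : r ≤ (volume E₁).toReal := by
        have h5 : volume E₁ ≠ ⊤ := (lt_of_le_of_lt (measure_mono hE₁J) hJfin).ne
        have := ENNReal.toReal_mono h5 hE₁vol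
        rwa [ENNReal.toReal_ofReal hr.le] at this
      have hstep1 : (g₁ x).re ≤ ((b x - m) * (6*(1+L^2)*r)⁻¹) * (volume E₁).toReal := by
        rw [h1]
        calc ∫ y in E₁, (b x - b y) * (cauchyKernel A x y).re
            ≤ ∫ y in E₁, ((b x - m) * (6*(1+L^2)*r)⁻¹) := by
              apply integral_mono_ae hint1
                (integrableOn_const (lt_of_le_of_lt (measure_mono hE₁J) hJfin).ne)
              filter_upwards [ae_restrict_mem hE₁m, ae_restrict_of_ae hbb'] with y hyE hyb
              have hby : m ≤ b y := by rw [hyb]; exact hyE.1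
              have hKre := (kernel_bounds hL hA hr hxI (hE₁J hyE)).1
              calc (b x - b y) * (cauchyKernel A x y).re
                  ≤ (b x - m) * (cauchyKernel A x y).re :=
                    mul_le_mul_of_nonneg_right (by linarith) (le_trans hcpos.le hKre)
                _ ≤ (b x - m) * (6*(1+L^2)*r)⁻¹ :=
                    mul_le_mul_of_nonpos_left hKre (by linarith)
          _ = ((b x - m) * (6*(1+L^2)*r)⁻¹) * (volume E₁).toReal := by
              rw [setIntegral_const, smul_eq_mul, measureReal_def]; ring
      have hstep2 : ((b x - m) * (6*(1+L^2)*r)⁻¹) * (volume E₁).toReal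
          ≤ ((b x - m) * (6*(1+L^2)*r)⁻¹) * r := by
        apply mul_le_mul_of_nonpos_left hvol₁
        apply mul_nonpos_of_nonpos_of_nonneg (by linarith) hcpos.le
      have hcr : (6*(1+L^2)*r)⁻¹ * r = (6*(1+L^2))⁻¹ := by
        field_simp
      have h7 : (g₁ x).re ≤ (b x - m) * (6*(1+L^2))⁻¹ := by
        calc (g₁ x).re ≤ ((b x - m) * (6*(1+L^2)*r)⁻¹) * r := le_trans hstep1 hstep2
          _ = (b x - m) * (6*(1+L^2))⁻¹ := by rw [mul_assoc, hcr]
      have h8 : 6*(1+L^2) * (g₁ x).re ≤ b x - m := by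
        have := mul_le_mul_of_nonneg_left h7 hκpos.le
        calc 6*(1+L^2) * (g₁ x).re ≤ 6*(1+L^2) * ((b x - m) * (6*(1+L^2))⁻¹) := this
          _ = b x - m := by field_simp
      rw [abs_of_nonpos (by linarith)]
      nlinarith [norm_nonneg (g₂ x), habs_re₁, hκpos]
    · -- use g₂ : on E₂, b y ≤ m ≤ b x
      have hvol₂ : r ≤ (volume E₂).toReal := by
        have h5 : volume E₂ ≠ ⊤ := (lt_of_le_of_lt (measure_mono hE₂J) hJfin).ne
        have := ENNReal.toReal_mono h5 hE₂vol
        rwa [ENNReal.toReal_ofReal hr.le] at this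
      have hstep1 : ((b x - m) * (6*(1+L^2)*r)⁻¹) * (volume E₂).toReal ≤ (g₂ x).re := by
        rw [h2]
        calc ((b x - m) * (6*(1+L^2)*r)⁻¹) * (volume E₂).toReal
            = ∫ y in E₂, ((b x - m) * (6*(1+L^2)*r)⁻¹) := by
              rw [setIntegral_const, smul_eq_mul, measureReal_def]; ring
          _ ≤ ∫ y in E₂, (b x - b y) * (cauchyKernel A x y).re := by
              apply integral_mono_ae
                (integrableOn_const (C := (b x - m) * (6*(1+L^2)*r)⁻¹) (lt_of_le_of_lt (measure_mono hE₂J) hJfin).ne)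
                hint2
              filter_upwards [ae_restrict_mem hE₂m, ae_restrict_of_ae hbb'] with y hyE hyb
              have hby : b y ≤ m := by rw [hyb]; exact hyE.1
              have hKre := (kernel_bounds hL hA hr hxI (hE₂J hyE)).1
              calc (b x - m) * (6*(1+L^2)*r)⁻¹
                  ≤ (b x - m) * (cauchyKernel A x y).re :=
                    mul_le_mul_of_nonneg_left hKre (by linarith)
                _ ≤ (b x - b y) * (cauchyKernel A x y).re :=
                    mul_le_mul_of_nonneg_right (by linarith) (le_trans hcpos.le hKre)
      have hstep2 : ((b x - m) * (6*(1+L^2)*r)⁻¹) * r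
          ≤ ((b x - m) * (6*(1+L^2)*r)⁻¹) * (volume E₂).toReal := by
        apply mul_le_mul_of_nonneg_left hvol₂
        apply mul_nonneg (by linarith) hcpos.le
      have hcr : (6*(1+L^2)*r)⁻¹ * r = (6*(1+L^2))⁻¹ := by
        field_simp
      have h7 : (b x - m) * (6*(1+L^2))⁻¹ ≤ (g₂ x).re := by
        calc (b x - m) * (6*(1+L^2))⁻¹ = ((b x - m) * (6*(1+L^2)*r)⁻¹) * r := by
              rw [mul_assoc, hcr]
          _ ≤ (g₂ x).re := le_trans hstep2 hstep1
      have h8 : b x - m ≤ 6*(1+L^2) * (g₂ x).re := by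
        have := mul_le_mul_of_nonneg_left h7 hκpos.le
        calc b x - m = 6*(1+L^2) * ((b x - m) * (6*(1+L^2))⁻¹) := by field_simp
          _ ≤ 6*(1+L^2) * (g₂ x).re := this
      rw [abs_of_nonneg (by linarith)]
      nlinarith [norm_nonneg (g₁ x), habs_re₂, hκpos]
  -- integral bound via Hölder
  have hbmint : IntegrableOn (fun x => |b x - m|) I volume :=
    (hbIint.sub (integrableOn_const hIfin.ne)).abs
  have h2r0 : ENNReal.ofReal (2*r) ≠ 0 := (ENNReal.ofReal_pos.mpr h2r).ne'
  have h2rtop : ENNReal.ofReal (2*r) ≠ ⊤ := ENNReal.ofReal_ne_top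
  have hgL1 : ∀ (gg : ℝ → ℂ), AEStronglyMeasurable gg (volume.restrict I) →
      eLpNorm gg p (volume.restrict I) ≤
        ENNReal.ofReal C * ENNReal.ofReal (2*r) ^ (1/p.toReal) →
      (∫⁻ x in I, ‖gg x‖₊) ≤ ENNReal.ofReal C * ENNReal.ofReal (2*r) := by
    intro gg hggm hggn
    have hexp : 1/(1:ℝ≥0∞).toReal - 1/p.toReal = 1 - 1/p.toReal := by
      norm_num
    calc (∫⁻ x in I, ‖gg x‖₊) = eLpNorm gg 1 (volume.restrict I) :=
        (eLpNorm_one_eq_lintegral_enorm (f := gg)).symm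
      _ ≤ eLpNorm gg p (volume.restrict I)
          * (volume.restrict I Set.univ) ^ (1/(1:ℝ≥0∞).toReal - 1/p.toReal) :=
        eLpNorm_le_eLpNorm_mul_rpow_measure_univ hp1.le hggm
      _ ≤ (ENNReal.ofReal C * ENNReal.ofReal (2*r) ^ (1/p.toReal))
          * ENNReal.ofReal (2*r) ^ (1 - 1/p.toReal) := by
        rw [Measure.restrict_apply_univ, hIvol, hexp]
        exact mul_le_mul_left hggn _
      _ = ENNReal.ofReal C * ENNReal.ofReal (2*r) := by
        rw [mul_assoc, ← ENNReal.rpow_add _ _ h2r0 h2rtop]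
        have hadd : 1/p.toReal + (1 - 1/p.toReal) = 1 := by ring
        rw [hadd, ENNReal.rpow_one]
  have hSr : ∫ x in I, |b x - m| ≤ 24*(1+L^2)*C*r := by
    have hS : ENNReal.ofReal (∫ x in I, |b x - m|)
        ≤ ENNReal.ofReal (24*(1+L^2)*C*r) := by
      rw [ofReal_integral_eq_lintegral_ofReal hbmint
        (Filter.Eventually.of_forall fun x => abs_nonneg _)]
      calc ∫⁻ x in I, ENNReal.ofReal |b x - m|
          ≤ ∫⁻ x in I, ENNReal.ofReal (6*(1+L^2)) * (↑‖g₁ x‖₊ + ↑‖g₂ x‖₊) := by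
            apply lintegral_mono_ae
            filter_upwards [hptwise] with x hx
            calc ENNReal.ofReal |b x - m|
                ≤ ENNReal.ofReal (6*(1+L^2) * (‖g₁ x‖ + ‖g₂ x‖)) := ENNReal.ofReal_le_ofReal hx
              _ = ENNReal.ofReal (6*(1+L^2)) * (↑‖g₁ x‖₊ + ↑‖g₂ x‖₊) := by
                  rw [ENNReal.ofReal_mul (by positivity),
                    ENNReal.ofReal_add (norm_nonneg _) (norm_nonneg _),
                    ofReal_norm, ofReal_norm, enorm_eq_nnnorm, enorm_eq_nnnorm]
        _ = ENNReal.ofReal (6*(1+L^2))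
            * ((∫⁻ x in I, ‖g₁ x‖₊) + ∫⁻ x in I, ‖g₂ x‖₊) := by
            rw [lintegral_const_mul' _ _ ENNReal.ofReal_ne_top,
              lintegral_add_left' (show AEMeasurable (fun a => (‖g₁ a‖₊ : ℝ≥0∞)) (volume.restrict I) from hg₁m.enorm)]
        _ ≤ ENNReal.ofReal (6*(1+L^2))
            * ((ENNReal.ofReal C * ENNReal.ofReal (2*r))
              + (ENNReal.ofReal C * ENNReal.ofReal (2*r))) := by
            apply mul_le_mul_right
            exact add_le_add (hgL1 g₁ hg₁m hg₁n) (hgL1 g₂ hg₂m hg₂n)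
        _ = ENNReal.ofReal (24*(1+L^2)*C*r) := by
            rw [← ENNReal.ofReal_mul hC, ← ENNReal.ofReal_add (by positivity) (by positivity),
              ← ENNReal.ofReal_mul (by positivity)]
            congr 1
            ring
    exact (ENNReal.ofReal_le_ofReal_iff (by positivity)).mp hS
  -- from |b - m| control to mean oscillation
  have hvolT : (volume I).toReal = 2*r := by
    rw [hIvol, ENNReal.toReal_ofReal h2r.le]
  have hmconst : IntegrableOn (fun _ : ℝ => m) I volume :=
    integrableOn_const hIfin.ne
  set bI : ℝ := intervalAvg b x₀ r with hbIdef
  have havg : m - bI = (2*r)⁻¹ * ∫ x in I, (m - b x) := by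
    rw [integral_sub hmconst hbIint, setIntegral_const, smul_eq_mul, measureReal_def, hvolT, hbIdef, intervalAvg]
    field_simp
    ring
  have habs2 : |m - bI| * (2*r) ≤ ∫ x in I, |b x - m| := by
    have h9 : |∫ x in I, (m - b x)| ≤ ∫ x in I, |m - b x| := by
      have := norm_integral_le_integral_norm (μ := volume.restrict I) (fun x => m - b x)
      simpa [Real.norm_eq_abs] using this
    have h10 : ∫ x in I, |m - b x| = ∫ x in I, |b x - m| := by
      apply setIntegral_congr_fun measurableSet_Ioo
      intro x _
      exact abs_sub_comm m (b x)
    rw [havg, abs_mul, abs_inv, abs_of_pos h2r]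
    calc (2*r)⁻¹ * |∫ x in I, (m - b x)| * (2*r)
        = |∫ x in I, (m - b x)| := by field_simp
      _ ≤ ∫ x in I, |b x - m| := by rw [← h10]; exact h9
  have hbbIint : IntegrableOn (fun x => |b x - bI|) I volume :=
    (hbIint.sub (integrableOn_const hIfin.ne)).abs
  have hosc2 : ∫ x in I, |b x - bI| ≤ 2 * (24*(1+L^2)*C*r) := by
    calc ∫ x in I, |b x - bI| ≤ ∫ x in I, (|b x - m| + |m - bI|) := by
          apply integral_mono_ae hbbIint
            (hbmint.add (integrableOn_const hIfin.ne))
          apply Filter.Eventually.of_forall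
          intro x
          exact abs_sub_le (b x) m bI
      _ = (∫ x in I, |b x - m|) + (volume I).toReal * |m - bI| := by
          rw [integral_add hbmint (integrableOn_const hIfin.ne),
            setIntegral_const, smul_eq_mul, measureReal_def]
      _ ≤ 2 * (24*(1+L^2)*C*r) := by
          rw [hvolT]
          nlinarith [habs2, hSr]
  have hfinal : meanOsc b x₀ r ≤ 24*(1+L^2)*C := by
    rw [meanOsc]
    have h11 : (2*r)⁻¹ * (∫ y in Set.Ioo (x₀ - r) (x₀ + r), |b y - intervalAvg b x₀ r|)
        ≤ (2*r)⁻¹ * (2 * (24*(1+L^2)*C*r)) := by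
      apply mul_le_mul_of_nonneg_left _ (by positivity)
      exact hosc2
    calc (2*r)⁻¹ * (∫ y in Set.Ioo (x₀ - r) (x₀ + r), |b y - intervalAvg b x₀ r|)
        ≤ (2*r)⁻¹ * (2 * (24*(1+L^2)*C*r)) := h11
      _ = 24*(1+L^2)*C := by field_simp
  exact hfinal

/-- If `b ∈ L^q_loc(ℝ)` for some `1 < q < ∞` and the commutator `[b, C_Γ]` is bounded on
`L^p(ℝ)` with constant `C`, then `b ∈ BMO(ℝ)` with `‖b‖_BMO ≤ C₂ C`, where `C₂`
depends only on `p` and `L`. -/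
theorem commutator_bounded_implies_bmo
    (A : ℝ → ℝ) (L : ℝ) (hL : 0 < L)
    (hA : ∀ x₁ x₂ : ℝ, |A x₁ - A x₂| ≤ L * |x₁ - x₂|)
    (p : ℝ≥0∞) (hp1 : 1 < p) (hp2 : p ≠ ⊤) :
    ∃ C₂ : ℝ, 0 < C₂ ∧
      ∀ q : ℝ≥0∞, 1 < q → q ≠ ⊤ →
      ∀ b : ℝ → ℝ,
        (∀ K : Set ℝ, IsCompact K → MemLp b q (volume.restrict K)) →
        ∀ C : ℝ, 0 ≤ C →
          (∀ f : ℝ → ℂ, MemLp f p volume →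
            ∃ g : ℝ → ℂ, IsCommutatorFn A b f g ∧
              eLpNorm g p volume ≤ ENNReal.ofReal C * eLpNorm f p volume) →
          IsBMO b ∧ bmoNorm b ≤ C₂ * C := by
  refine ⟨24*(1+L^2), by positivity, ?_⟩
  intro q hq1 hq2 b hbq C hC hbound
  have hbloc : MeasureTheory.LocallyIntegrable b volume := by
    rw [MeasureTheory.locallyIntegrable_iff]
    intro k hk
    haveI : IsFiniteMeasure (volume.restrict k) :=
      ⟨by rw [Measure.restrict_apply_univ]; exact hk.measure_lt_top⟩
    exact (hbq k hk).integrable hq1.le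
  have hwith : IsBMOWith b (24*(1+L^2)*C) :=
    ⟨hbloc, fun x r hr => osc_bound A L hL hA p hp1 hp2 b hbloc C hC hbound x r hr⟩
  refine ⟨⟨_, hwith⟩, ?_⟩
  have hbdd : BddBelow {N : ℝ | IsBMOWith b N} := by
    refine ⟨0, fun N hN => ?_⟩
    have h1 := hN.2 0 1 one_pos
    have h2 : 0 ≤ meanOsc b 0 1 := by
      rw [meanOsc]
      apply mul_nonneg (by norm_num)
      apply integral_nonneg
      intro y
      exact abs_nonneg _
    linarith
  exact csInf_le hbdd hwith
end

section
/- Let A : ℝ → ℝ be Lipschitz with constant L and let K(x,y) = 1/(y − x + i(A(y) − A(x))). Then for all x, y, y' ∈ ℝ with x ≠ y and |y − y'| ≤ |y − x|/2, one has |K(x,y) − K(x,y')| ≤ 2(L+1)|y − y'|/|y − x|² and |K(y,x) − K(y',x)| ≤ 2(L+1)|y − y'|/|y − x|². -/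
open MeasureTheory Filter Set

/-- Smoothness estimates for the Cauchy kernel: if `|y - y'| ≤ |y - x|/2` then
`|K(x,y) - K(x,y')| ≤ 2(L+1)|y - y'|/|y - x|²` and
`|K(y,x) - K(y',x)| ≤ 2(L+1)|y - y'|/|y - x|²`. -/
theorem cauchyKernel_smoothness
    (A : ℝ → ℝ) (L : ℝ) (hL : 0 < L)
    (hA : ∀ x₁ x₂ : ℝ, |A x₁ - A x₂| ≤ L * |x₁ - x₂|) :
    ∀ x y y' : ℝ, x ≠ y → |y - y'| ≤ |y - x| / 2 →
      ‖cauchyKernel A x y - cauchyKernel A x y'‖ ≤ 2 * (L + 1) * |y - y'| / |y - x| ^ 2 ∧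
      ‖cauchyKernel A y x - cauchyKernel A y' x‖ ≤ 2 * (L + 1) * |y - y'| / |y - x| ^ 2 := by
  intro x y y' hxy hclose
  set D : ℝ → ℝ → ℂ := fun a b => (b : ℂ) - a + Complex.I * ((A b : ℂ) - A a) with hD
  have hre : ∀ a b : ℝ, |b - a| ≤ ‖D a b‖ := by
    intro a b
    have h1 : (D a b).re = b - a := by simp [hD]
    calc |b - a| = |(D a b).re| := by rw [h1]
      _ ≤ ‖D a b‖ := Complex.abs_re_le_norm _
  have hpos : 0 < |y - x| := by
    rw [abs_pos, sub_ne_zero]; exact (Ne.symm hxy)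
  have ha : |y - x| ≤ ‖D x y‖ := hre x y
  have hb : |y - x| / 2 ≤ ‖D x y'‖ := by
    have h1 : |y - x| ≤ |y - y'| + |y' - x| := abs_sub_le y y' x
    have := hre x y'
    linarith
  have haz : D x y ≠ 0 := by
    intro h; rw [h, norm_zero] at ha; linarith
  have hbz : D x y' ≠ 0 := by
    intro h; rw [h, norm_zero] at hb; linarith
  have hnum : ‖D x y' - D x y‖ ≤ (L + 1) * |y - y'| := by
    have h1 : D x y' - D x y = ((y' : ℂ) - y) + Complex.I * ((A y' : ℂ) - A y) := by
      simp [hD]; ring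
    rw [h1]
    have h2 : ‖((y' : ℂ) - y) + Complex.I * ((A y' : ℂ) - A y)‖
        ≤ ‖((y' : ℂ) - y)‖ + ‖Complex.I * ((A y' : ℂ) - A y)‖ := norm_add_le _ _
    have h3 : ‖((y' : ℂ) - y)‖ = |y' - y| := by
      rw [← Complex.ofReal_sub, Complex.norm_real, Real.norm_eq_abs]
    have h4 : ‖Complex.I * ((A y' : ℂ) - A y)‖ = |A y' - A y| := by
      rw [norm_mul, Complex.norm_I, one_mul, ← Complex.ofReal_sub, Complex.norm_real,
        Real.norm_eq_abs]
    have h5 : |A y' - A y| ≤ L * |y' - y| := hA y' y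
    rw [h3, h4] at h2
    have h6 : |y' - y| = |y - y'| := abs_sub_comm y' y
    nlinarith [abs_nonneg (y - y')]
  have hmain : ‖(D x y)⁻¹ - (D x y')⁻¹‖ ≤ 2 * (L + 1) * |y - y'| / |y - x| ^ 2 := by
    rw [inv_sub_inv haz hbz, norm_div, norm_mul]
    have hden : |y - x| * (|y - x| / 2) ≤ ‖D x y‖ * ‖D x y'‖ :=
      mul_le_mul ha hb (by linarith) (norm_nonneg _)
    have hdpos : 0 < |y - x| * (|y - x| / 2) := by positivity
    have := div_le_div₀ (by positivity : (0:ℝ) ≤ (L + 1) * |y - y'|) hnum hdpos hden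
    calc ‖D x y' - D x y‖ / (‖D x y‖ * ‖D x y'‖)
        ≤ (L + 1) * |y - y'| / (|y - x| * (|y - x| / 2)) := this
      _ = 2 * (L + 1) * |y - y'| / |y - x| ^ 2 := by
          field_simp
  have hK : ∀ a b : ℝ, cauchyKernel A a b = (D a b)⁻¹ := fun a b => rfl
  constructor
  · rw [hK, hK]; exact hmain
  · have hneg : ∀ a b : ℝ, D b a = -(D a b) := by
      intro a b; simp [hD]; ring
    rw [hK, hK, hneg x y, hneg x y', inv_neg, inv_neg, neg_sub_neg, norm_sub_rev]
    exact hmain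
end

section
/- Let A : ℝ → ℝ be Lipschitz with constant L. Then the Cauchy integral operator C_Γ is 1-1-homogeneous: there exists a constant c > 0 depending only on L (one may take c = 2/(π(L²+1)) up to an absolute factor) such that for every M > 10, every r > 0, and all disjoint intervals I₀ = (x₀ − r, x₀ + r) and I₁ = (x₁ − r, x₁ + r) satisfying Mr ≤ |y₀ − y₁| ≤ 2Mr for all y₀ ∈ I₀ and y₁ ∈ I₁, one has |C_Γ(χ_{I₁})(x)| ≥ c/M for all x ∈ I₀. -/
open MeasureTheory Filter Set

/-- The Cauchy integral operator is `1`-`1`-homogeneous: there is `c > 0` depending only on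
`L` such that for every `M > 10`, `r > 0` and disjoint intervals `I₀ = (x₀ - r, x₀ + r)`,
`I₁ = (x₁ - r, x₁ + r)` with `M r ≤ |y₀ - y₁| ≤ 2 M r` for all `y₀ ∈ I₀`, `y₁ ∈ I₁`, one has
`|C_Γ(χ_{I₁})(x)| ≥ c / M` for all `x ∈ I₀`. -/
theorem cauchy_integral_homogeneous
    (A : ℝ → ℝ) (L : ℝ) (hL : 0 < L)
    (hA : ∀ x₁ x₂ : ℝ, |A x₁ - A x₂| ≤ L * |x₁ - x₂|) :
    ∃ c : ℝ, 0 < c ∧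
      ∀ M : ℝ, 10 < M → ∀ r : ℝ, 0 < r → ∀ x₀ x₁ : ℝ,
        Disjoint (Set.Ioo (x₀ - r) (x₀ + r)) (Set.Ioo (x₁ - r) (x₁ + r)) →
        (∀ y₀ ∈ Set.Ioo (x₀ - r) (x₀ + r), ∀ y₁ ∈ Set.Ioo (x₁ - r) (x₁ + r),
          M * r ≤ |y₀ - y₁| ∧ |y₀ - y₁| ≤ 2 * M * r) →
        ∀ x ∈ Set.Ioo (x₀ - r) (x₀ + r),
          ∃ v : ℂ,
            cauchyPV A (Set.indicator (Set.Ioo (x₁ - r) (x₁ + r)) (fun _ => (1 : ℂ))) x v ∧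
            c / M ≤ ‖v‖ := by
  refine ⟨1 / (2 * (1 + L ^ 2)), by positivity, ?_⟩
  intro M hM r hr x₀ x₁ _hdisj hsep x hx
  have hM0 : (0 : ℝ) < M := by linarith
  have hMr : 0 < M * r := by positivity
  set I₁ : Set ℝ := Set.Ioo (x₁ - r) (x₁ + r) with hI₁def
  set z : ℝ → ℂ := fun y => ((y : ℂ) - (x : ℂ) + Complex.I * ((A y : ℂ) - (A x : ℂ))) with hzdef
  have hzre : ∀ y : ℝ, (z y).re = y - x := by intro y; simp [hzdef]
  have hzim : ∀ y : ℝ, (z y).im = A y - A x := by intro y; simp [hzdef]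
  have hdist : ∀ y ∈ I₁, M * r ≤ |x - y| ∧ |x - y| ≤ 2 * M * r := fun y hy => hsep x hx y hy
  have hre_ge : ∀ y ∈ I₁, M * r ≤ |y - x| := by
    intro y hy
    have := (hdist y hy).1; rwa [abs_sub_comm] at this
  have hnormSq_le : ∀ y ∈ I₁, Complex.normSq (z y) ≤ (1 + L ^ 2) * (2 * M * r) ^ 2 := by
    intro y hy
    have h1 := (hdist y hy).2
    have h2 : |A y - A x| ≤ L * |y - x| := hA y x
    have h2' := mul_self_le_mul_self (abs_nonneg (A y - A x)) h2
    have h3 : (A y - A x) ^ 2 ≤ L ^ 2 * (y - x) ^ 2 := by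
      nlinarith [sq_abs (y - x), sq_abs (A y - A x)]
    have h4 : (y - x) ^ 2 ≤ (2 * M * r) ^ 2 := by
      have h5 : |y - x| ≤ 2 * M * r := by rwa [abs_sub_comm] at h1
      nlinarith [abs_nonneg (y - x), sq_abs (y - x)]
    rw [Complex.normSq_apply, hzre, hzim]
    nlinarith [sq_nonneg L]
  have hz_ne : ∀ y ∈ I₁, z y ≠ 0 := by
    intro y hy h
    have h0 : (z y).re = 0 := by rw [h]; simp
    rw [hzre] at h0
    have h1 := hre_ge y hy
    rw [h0] at h1; simp at h1; nlinarith
  -- norm lower bound for integrability bound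
  have hnorm_bound : ∀ y ∈ I₁, ‖cauchyKernel A x y‖ ≤ (M * r)⁻¹ := by
    intro y hy
    have h1 : M * r ≤ ‖z y‖ := by
      calc M * r ≤ |y - x| := hre_ge y hy
        _ = |(z y).re| := by rw [hzre]
        _ ≤ ‖z y‖ := Complex.abs_re_le_norm _
        _ = ‖z y‖ := rfl
    rw [show cauchyKernel A x y = (z y)⁻¹ from rfl, norm_inv]
    exact inv_anti₀ hMr h1
  -- measurability / integrability
  have hcontA : Continuous A := by
    have : LipschitzWith (Real.toNNReal L) A := by
      apply LipschitzWith.of_dist_le_mul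
      intro a b
      rw [Real.dist_eq, Real.dist_eq, Real.coe_toNNReal L hL.le]
      exact hA a b
    exact this.continuous
  have hcontz : Continuous z := by
    apply Continuous.add
    · exact (Complex.continuous_ofReal.sub continuous_const)
    · exact continuous_const.mul ((Complex.continuous_ofReal.comp hcontA).sub continuous_const)
  have hcontK : ContinuousOn (fun y => cauchyKernel A x y) I₁ := by
    exact ContinuousOn.inv₀ hcontz.continuousOn hz_ne
  have hmeasI₁ : MeasurableSet I₁ := measurableSet_Ioo
  have hvol : volume I₁ < ⊤ := measure_Ioo_lt_top
  have hint : IntegrableOn (fun y => cauchyKernel A x y) I₁ volume := by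
    refine ⟨hcontK.aestronglyMeasurable hmeasI₁, ?_⟩
    apply HasFiniteIntegral.restrict_of_bounded hvol (C := (M * r)⁻¹)
    filter_upwards [ae_restrict_mem hmeasI₁] with y hy using hnorm_bound y hy
  set v : ℂ := ∫ y in I₁, cauchyKernel A x y with hvdef
  refine ⟨v, ?_, ?_⟩
  · -- principal value exists and equals v
    apply Tendsto.congr' _ tendsto_const_nhds
    filter_upwards [Ioo_mem_nhdsGT_of_mem (show (0:ℝ) ∈ Set.Ico 0 (M * r) from ⟨le_rfl, hMr⟩)]
      with δ hδ
    have hsub : I₁ ⊆ {y : ℝ | δ < |y - x|} := by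
      intro y hy
      exact lt_of_lt_of_le hδ.2 (hre_ge y hy)
    have heq : ∀ y : ℝ, cauchyKernel A x y * Set.indicator I₁ (fun _ => (1:ℂ)) y
        = Set.indicator I₁ (fun y => cauchyKernel A x y) y := by
      intro y
      by_cases hy : y ∈ I₁ <;> simp [hy]
    calc v = ∫ y in {y : ℝ | δ < |y - x|} ∩ I₁, cauchyKernel A x y := by
            rw [Set.inter_eq_right.mpr hsub]
      _ = ∫ y in {y : ℝ | δ < |y - x|}, Set.indicator I₁ (fun y => cauchyKernel A x y) y :=
            (setIntegral_indicator hmeasI₁).symm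
      _ = ∫ y in {y : ℝ | δ < |y - x|}, cauchyKernel A x y
            * Set.indicator I₁ (fun _ => (1:ℂ)) y := by
            exact setIntegral_congr_fun (by
              exact measurableSet_lt measurable_const (by fun_prop))
              (fun y _ => (heq y).symm)
  · -- lower bound on the norm
    have hre_int : v.re = ∫ y in I₁, (cauchyKernel A x y).re := (integral_re hint).symm
    have hKre : ∀ y : ℝ, (cauchyKernel A x y).re = (y - x) / Complex.normSq (z y) := by
      intro y
      rw [show cauchyKernel A x y = (z y)⁻¹ from rfl, Complex.inv_re, hzre]
    have hintre : IntegrableOn (fun y => (cauchyKernel A x y).re) I₁ volume := hint.re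
    have hb : (0:ℝ) < 1 / (4 * (1 + L ^ 2) * (M * r)) := by positivity
    have hkey : ∀ y ∈ I₁, 0 < y - x →
        1 / (4 * (1 + L ^ 2) * (M * r)) ≤ (cauchyKernel A x y).re := by
      intro y hy hpos
      rw [hKre]
      have h1 : M * r ≤ y - x := by
        have := hre_ge y hy; rwa [abs_of_pos hpos] at this
      have h2 := hnormSq_le y hy
      have h3 : 0 < Complex.normSq (z y) := Complex.normSq_pos.mpr (hz_ne y hy)
      rw [div_le_div_iff₀ (by positivity) h3]
      nlinarith [sq_nonneg L]
    have hkey' : ∀ y ∈ I₁, y - x < 0 →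
        1 / (4 * (1 + L ^ 2) * (M * r)) ≤ -(cauchyKernel A x y).re := by
      intro y hy hneg
      rw [hKre]
      have h1 : M * r ≤ x - y := by
        have := hre_ge y hy; rw [abs_of_neg hneg] at this; linarith
      have h2 := hnormSq_le y hy
      have h3 : 0 < Complex.normSq (z y) := Complex.normSq_pos.mpr (hz_ne y hy)
      rw [← neg_div, div_le_div_iff₀ (by positivity) h3]
      nlinarith [sq_nonneg L]
    -- sign of y - x is constant on I₁, determined by x vs x₁
    have hx₁I : x₁ ∈ I₁ := by constructor <;> [linarith; linarith]
    have hvol2r : (volume I₁).toReal = 2 * r := by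
      rw [hI₁def, Real.volume_Ioo, ENNReal.toReal_ofReal (by linarith)]
      ring
    have hcM : 1 / (2 * (1 + L ^ 2)) / M
        = 1 / (4 * (1 + L ^ 2) * (M * r)) * (volume I₁).toReal := by
      rw [hvol2r]; field_simp; ring
    rcases lt_or_gt_of_ne (fun h : x = x₁ => by
        have := hre_ge x₁ hx₁I; rw [← h] at this; simp at this; nlinarith) with hlt | hgt
    · -- x < x₁ : y - x > 0 on I₁
      have hpos : ∀ y ∈ I₁, 0 < y - x := by
        intro y hy
        have h1 := hre_ge x₁ hx₁I
        have h2 : x₁ - x = |x₁ - x| := by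
          rw [abs_of_pos (by linarith)]
        rw [← h2] at h1
        have : x₁ - r ≤ y := le_of_lt hy.1
        nlinarith [hM, hr]
      have := setIntegral_ge_of_const_le_real hmeasI₁ hvol.ne
        (fun y hy => hkey y hy (hpos y hy)) hintre
      have hvre : 1 / (2 * (1 + L ^ 2)) / M ≤ v.re := by
        rw [hcM, hre_int]; exact this
      calc 1 / (2 * (1 + L ^ 2)) / M ≤ v.re := hvre
        _ ≤ |v.re| := le_abs_self _
        _ ≤ ‖v‖ := Complex.abs_re_le_norm v
        _ = ‖v‖ := rfl
    · -- x > x₁ : y - x < 0 on I₁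
      have hneg : ∀ y ∈ I₁, y - x < 0 := by
        intro y hy
        have h1 := hre_ge x₁ hx₁I
        have h2 : x - x₁ = |x₁ - x| := by
          rw [abs_sub_comm, abs_of_pos (by linarith)]
        rw [← h2] at h1
        have : y ≤ x₁ + r := le_of_lt hy.2
        nlinarith [hM, hr]
      have hintre' : IntegrableOn (fun y => -(cauchyKernel A x y).re) I₁ volume := hintre.neg
      have := setIntegral_ge_of_const_le_real hmeasI₁ hvol.ne
        (fun y hy => hkey' y hy (hneg y hy)) hintre'
      have hvre : 1 / (2 * (1 + L ^ 2)) / M ≤ -v.re := by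
        rw [hcM, hre_int, ← integral_neg]; exact this
      calc 1 / (2 * (1 + L ^ 2)) / M ≤ -v.re := hvre
        _ ≤ |v.re| := neg_le_abs _
        _ ≤ ‖v‖ := Complex.abs_re_le_norm v
        _ = ‖v‖ := rfl
end

section
/- Let A : ℝ → ℝ be Lipschitz with constant L and let K(x,y) = 1/(y − x + i(A(y) − A(x))). Let f : ℝ → ℝ be integrable with supp f ⊆ I := (x₀ − r, x₀ + r), ∫_ℝ f = 0, and |f(z)| ≤ N for a.e. z. Then for every y ∈ ℝ with |y − x₀| ≥ 2r, the integral ∫_I K(y,z) f(z) dz converges absolutely and |∫_I K(y,z) f(z) dz| ≤ 4(L+1) N r² / |y − x₀|². -/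
open MeasureTheory Filter Set

/-- Cancellation estimate: if `f` is integrable, supported in `I = (x₀ - r, x₀ + r)`, has
mean zero and `|f| ≤ N` a.e., then for `|y - x₀| ≥ 2r` the integral `∫_I K(y,z) f(z) dz`
converges absolutely and is bounded by `4(L+1) N r² / |y - x₀|²`. -/
theorem cauchyKernel_cancellation
    (A : ℝ → ℝ) (L : ℝ) (hL : 0 < L)
    (hA : ∀ x₁ x₂ : ℝ, |A x₁ - A x₂| ≤ L * |x₁ - x₂|)
    (f : ℝ → ℝ) (x₀ r : ℝ) (hr : 0 < r)
    (hsupp : Function.support f ⊆ Set.Ioo (x₀ - r) (x₀ + r))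
    (hint : Integrable f volume)
    (hzero : (∫ z : ℝ, f z) = 0)
    (N : ℝ) (hN : ∀ᵐ z : ℝ, |f z| ≤ N)
    (y : ℝ) (hy : 2 * r ≤ |y - x₀|) :
    IntegrableOn (fun z => cauchyKernel A y z * (f z : ℂ)) (Set.Ioo (x₀ - r) (x₀ + r))
        volume ∧
    ‖∫ z in Set.Ioo (x₀ - r) (x₀ + r), cauchyKernel A y z * (f z : ℂ)‖ ≤
      4 * (L + 1) * N * r ^ 2 / |y - x₀| ^ 2 := by
  set c : ℝ := |y - x₀| with hc_def
  have hc : 0 < c := lt_of_lt_of_le (by linarith) hy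
  have hN0 : 0 ≤ N := by
    obtain ⟨z, hz⟩ := hN.exists
    exact le_trans (abs_nonneg _) hz
  set I : Set ℝ := Set.Ioo (x₀ - r) (x₀ + r) with hI_def
  set D : ℝ → ℂ := fun z => (z : ℂ) - (y : ℂ) + Complex.I * ((A z : ℂ) - (A y : ℂ)) with hD
  have hKD : ∀ z, cauchyKernel A y z = (D z)⁻¹ := fun z => rfl
  have hre : ∀ z, (D z).re = z - y := by intro z; simp [hD]
  have hnormD : ∀ z, |z - y| ≤ ‖D z‖ := by
    intro z
    rw [← hre z]
    exact Complex.abs_re_le_norm _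
  -- lower bound on I
  have hzx : ∀ z ∈ I, |z - x₀| < r := by
    intro z hz
    rw [abs_sub_lt_iff]
    constructor <;> [linarith [hz.2]; linarith [hz.1]]
  have hlow : ∀ z ∈ I, c / 2 ≤ ‖D z‖ := by
    intro z hz
    refine le_trans ?_ (hnormD z)
    have h1 : c ≤ |y - z| + |z - x₀| := abs_sub_le y z x₀
    have h2 : |y - z| = |z - y| := abs_sub_comm _ _
    have := hzx z hz
    linarith
  have hDne : ∀ z ∈ I, D z ≠ 0 := by
    intro z hz h0
    have := hlow z hz
    rw [h0, norm_zero] at this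
    linarith
  have hDx₀ : c ≤ ‖D x₀‖ := by
    have := hnormD x₀
    rwa [show |x₀ - y| = c by rw [hc_def, abs_sub_comm]] at this
  have hDx₀ne : D x₀ ≠ 0 := by
    intro h0; rw [h0, norm_zero] at hDx₀; linarith
  -- continuity
  have hAlip : LipschitzWith (Real.toNNReal L) A := by
    apply LipschitzWith.of_dist_le_mul
    intro a b
    rw [Real.dist_eq, Real.dist_eq, Real.coe_toNNReal L hL.le]
    exact hA a b
  have hDcont : Continuous D := by
    apply Continuous.add
    · exact Complex.continuous_ofReal.sub continuous_const
    · exact continuous_const.mul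
        ((Complex.continuous_ofReal.comp hAlip.continuous).sub continuous_const)
  have hKmeas : AEStronglyMeasurable (fun z => cauchyKernel A y z) (volume.restrict I) := by
    have : ContinuousOn (fun z => (D z)⁻¹) I :=
      ContinuousOn.inv₀ hDcont.continuousOn hDne
    simpa [hKD] using this.aestronglyMeasurable measurableSet_Ioo
  have hfI : IntegrableOn (fun z => (f z : ℂ)) I volume := hint.ofReal.integrableOn
  -- bound for kernel on I
  have hKbd : ∀ᵐ z ∂(volume.restrict I), ‖cauchyKernel A y z‖ ≤ 2 / c := by
    rw [ae_restrict_iff' measurableSet_Ioo]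
    apply ae_of_all
    intro z hz
    rw [hKD, norm_inv]
    calc ‖D z‖⁻¹ ≤ (c / 2)⁻¹ := inv_anti₀ (by positivity) (hlow z hz)
      _ = 2 / c := by field_simp
  have hintK : IntegrableOn (fun z => cauchyKernel A y z * (f z : ℂ)) I volume :=
    Integrable.bdd_mul hfI hKmeas hKbd
  refine ⟨hintK, ?_⟩
  -- the constant-kernel integral vanishes
  have hsetint : ∫ z in I, f z = 0 := by
    rw [setIntegral_eq_integral_of_forall_compl_eq_zero
      (fun x hx => Function.notMem_support.mp (fun h => hx (hsupp h)))]
    exact hzero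
  have hsetintC : ∫ z in I, (f z : ℂ) = 0 := by
    have : ∫ z in I, (f z : ℂ) = ((∫ z in I, f z : ℝ) : ℂ) := integral_ofReal
    rw [this, hsetint, Complex.ofReal_zero]
  have hconst : ∫ z in I, (D x₀)⁻¹ * (f z : ℂ) = 0 := by
    rw [integral_const_mul, hsetintC, mul_zero]
  have hintconst : IntegrableOn (fun z => (D x₀)⁻¹ * (f z : ℂ)) I volume :=
    hfI.const_mul _
  have hsplit : ∫ z in I, cauchyKernel A y z * (f z : ℂ)
      = ∫ z in I, ((D z)⁻¹ - (D x₀)⁻¹) * (f z : ℂ) := by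
    have : ∀ z, ((D z)⁻¹ - (D x₀)⁻¹) * (f z : ℂ)
        = cauchyKernel A y z * (f z : ℂ) - (D x₀)⁻¹ * (f z : ℂ) := by
      intro z; rw [hKD]; ring
    rw [integral_congr_ae (ae_of_all _ this), integral_sub hintK hintconst, hconst, sub_zero]
  rw [hsplit]
  -- pointwise bound on the difference kernel
  set C : ℝ := 2 * (L + 1) * r * N / c ^ 2 with hC_def
  have hbound : ∀ᵐ z ∂(volume), z ∈ I → ‖((D z)⁻¹ - (D x₀)⁻¹) * (f z : ℂ)‖ ≤ C := by
    filter_upwards [hN] with z hfz hz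
    rw [norm_mul, Complex.norm_real]
    have hdiff : ‖(D z)⁻¹ - (D x₀)⁻¹‖ ≤ 2 * (L + 1) * r / c ^ 2 := by
      rw [inv_sub_inv (hDne z hz) hDx₀ne, norm_div, norm_mul]
      have hnum : ‖D x₀ - D z‖ ≤ (L + 1) * r := by
        have : D x₀ - D z = ((x₀ - z : ℝ) : ℂ) + Complex.I * ((A x₀ - A z : ℝ) : ℂ) := by
          simp [hD]; push_cast; ring
        rw [this]
        refine le_trans (norm_add_le _ _) ?_
        rw [norm_mul, Complex.norm_I, one_mul, Complex.norm_real, Complex.norm_real,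
          Real.norm_eq_abs, Real.norm_eq_abs]
        have h1 : |x₀ - z| ≤ r := le_of_lt (by rw [abs_sub_comm]; exact hzx z hz)
        have h2 : |A x₀ - A z| ≤ L * |x₀ - z| := hA x₀ z
        nlinarith
      have hden : c / 2 * c ≤ ‖D z‖ * ‖D x₀‖ :=
        mul_le_mul (hlow z hz) hDx₀ (by linarith) (norm_nonneg _)
      calc ‖D x₀ - D z‖ / (‖D z‖ * ‖D x₀‖) ≤ ((L + 1) * r) / (c / 2 * c) := by
            apply div_le_div₀ (by positivity) hnum (by positivity) hden
        _ = 2 * (L + 1) * r / c ^ 2 := by field_simp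
    calc ‖(D z)⁻¹ - (D x₀)⁻¹‖ * |f z| ≤ (2 * (L + 1) * r / c ^ 2) * N :=
          mul_le_mul hdiff hfz (abs_nonneg _) (by positivity)
      _ = C := by rw [hC_def]; ring
  have hvol : (volume I).toReal = 2 * r := by
    show (volume (Set.Ioo (x₀ - r) (x₀ + r))).toReal = 2 * r
    rw [Real.volume_Ioo, ENNReal.toReal_ofReal (by linarith)]
    ring
  have hvolt : volume I < ⊤ := by
    show volume (Set.Ioo (x₀ - r) (x₀ + r)) < ⊤
    rw [Real.volume_Ioo]; exact ENNReal.ofReal_lt_top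
  have := norm_setIntegral_le_of_norm_le_const_ae' hvolt hbound
  rw [measureReal_def, hvol] at this
  refine le_trans this (le_of_eq ?_)
  rw [hC_def]
  field_simp
  ring
end

section
/- Let A : ℝ → ℝ be Lipschitz with constant L and let K(x,y) = 1/(y − x + i(A(y) − A(x))). Let p ∈ (1,∞). Then there is a constant C (depending only on L and p) such that for every ε ∈ (0, 1/2), every z ∈ ℝ with z ≠ 0, and every g ∈ L^p(ℝ), ∫_ℝ (∫_{|x−y| > ε^{−1}|z|} |K(x,y) − K(x+z,y)| |g(y)| dy)^p dx ≤ C ε^p ‖g‖_{L^p(ℝ)}^p. -/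
open MeasureTheory Filter Set
open scoped ENNReal

lemma kernel_pointwise {A : ℝ → ℝ} {L : ℝ} (hL : 0 < L)
    (hA : ∀ x₁ x₂ : ℝ, |A x₁ - A x₂| ≤ L * |x₁ - x₂|)
    {ε z x y : ℝ} (hε : 0 < ε) (hε2 : ε < 1 / 2) (hz : z ≠ 0)
    (hy : ε⁻¹ * |z| < |x - y|) :
    ‖cauchyKernel A x y - cauchyKernel A (x + z) y‖ ≤
      (2 * (1 + L) * |z|) * ((x - y) ^ 2)⁻¹ := by
  have hz0 : 0 < |z| := abs_pos.2 hz
  have hR : 0 < ε⁻¹ * |z| := mul_pos (inv_pos.2 hε) hz0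
  have hxy : 0 < |x - y| := hR.trans hy
  have hzε : |z| < ε * |x - y| := by
    have h := mul_lt_mul_of_pos_left hy hε
    rwa [← mul_assoc, mul_inv_cancel₀ hε.ne', one_mul] at h
  set a : ℂ := (y : ℂ) - (x : ℂ) + Complex.I * ((A y : ℂ) - (A x : ℂ)) with ha_def
  set b : ℂ := (y : ℂ) - ((x + z : ℝ) : ℂ) + Complex.I * ((A y : ℂ) - (A (x + z) : ℂ)) with hb_def
  have hare : a.re = y - x := by simp [ha_def]
  have hbre : b.re = y - (x + z) := by simp [hb_def]
  have ha : |x - y| ≤ ‖a‖ := by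
    calc |x - y| = |a.re| := by rw [hare, abs_sub_comm]
    _ ≤ ‖a‖ := Complex.abs_re_le_norm a
    _ = ‖a‖ := rfl
  have hb : |x - y| / 2 ≤ ‖b‖ := by
    have h1 : |x - y| - |z| ≤ |y - (x + z)| := by
      have := abs_sub_abs_le_abs_sub (x - y) (-z)
      have h2 : |x - y - -z| = |y - (x + z)| := by rw [abs_sub_comm]; ring_nf
      simp only [abs_neg] at this
      linarith [this, h2.le, h2.ge]
    have h3 : |x - y| / 2 ≤ |x - y| - |z| := by nlinarith [hzε, hxy]
    calc |x - y| / 2 ≤ |y - (x + z)| := le_trans h3 h1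
    _ = |b.re| := by rw [hbre]
    _ ≤ ‖b‖ := Complex.abs_re_le_norm b
    _ = ‖b‖ := rfl
  have ha0 : a ≠ 0 := by
    intro h; rw [h, norm_zero] at ha; linarith
  have hb0 : b ≠ 0 := by
    intro h; rw [h, norm_zero] at hb; linarith
  have hdiff : cauchyKernel A x y - cauchyKernel A (x + z) y = (b - a) / (a * b) := by
    rw [show cauchyKernel A x y = a⁻¹ from by rw [cauchyKernel],
        show cauchyKernel A (x + z) y = b⁻¹ from by rw [cauchyKernel]]
    exact inv_sub_inv ha0 hb0
  have hba : b - a = (-(z : ℂ)) + Complex.I * ((A x : ℂ) - (A (x + z) : ℂ)) := by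
    rw [ha_def, hb_def]; push_cast; ring
  have hba_norm : ‖b - a‖ ≤ (1 + L) * |z| := by
    rw [hba]
    calc ‖(-(z : ℂ)) + Complex.I * ((A x : ℂ) - (A (x + z) : ℂ))‖
        ≤ ‖(-(z : ℂ))‖ + ‖Complex.I * ((A x : ℂ) - (A (x + z) : ℂ))‖ := norm_add_le _ _
      _ = |z| + |A x - A (x + z)| := by
          rw [norm_neg, norm_mul, Complex.norm_I, one_mul]
          rw [Complex.norm_real, ← Complex.ofReal_sub, Complex.norm_real]
          simp [Real.norm_eq_abs]
      _ ≤ |z| + L * |x - (x + z)| := by linarith [hA x (x + z)]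
      _ = (1 + L) * |z| := by rw [show x - (x + z) = -z by ring, abs_neg]; ring
  rw [hdiff]
  rw [norm_div, norm_mul]
  have hab : (|x - y|) * (|x - y| / 2) ≤ ‖a‖ * ‖b‖ :=
    mul_le_mul ha hb (by positivity) (norm_nonneg a)
  have hab0 : 0 < (|x - y|) * (|x - y| / 2) := by positivity
  calc ‖b - a‖ / (‖a‖ * ‖b‖) ≤ ((1 + L) * |z|) / ((|x - y|) * (|x - y| / 2)) := by
        apply div_le_div₀ (by positivity) hba_norm hab0 hab
    _ = (2 * (1 + L) * |z|) * ((x - y) ^ 2)⁻¹ := by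
        rw [← sq_abs]
        field_simp

lemma lintegral_Ioi_inv_sq {R : ℝ} (hR : 0 < R) :
    ∫⁻ t in Ioi R, ENNReal.ofReal ((t ^ 2)⁻¹) = ENNReal.ofReal (1 / R) := by
  have heqon : EqOn (fun t : ℝ => t ^ (-2 : ℝ)) (fun t : ℝ => (t ^ 2)⁻¹) (Ioi R) := by
    intro t ht
    have ht0 : 0 < t := hR.trans ht
    show t ^ (-2 : ℝ) = (t ^ 2)⁻¹
    rw [Real.rpow_neg ht0.le, show (2 : ℝ) = ((2 : ℕ) : ℝ) from by norm_num, Real.rpow_natCast]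
  have hint : IntegrableOn (fun t : ℝ => (t ^ 2)⁻¹) (Ioi R) :=
    (integrableOn_Ioi_rpow_of_lt (by norm_num) hR).congr_fun heqon measurableSet_Ioi
  have hval : ∫ t in Ioi R, (t ^ 2)⁻¹ = 1 / R := by
    rw [← setIntegral_congr_fun measurableSet_Ioi heqon]
    rw [integral_Ioi_rpow_of_lt (by norm_num) hR]
    norm_num
    rw [Real.rpow_neg_one]
  rw [← ofReal_integral_eq_lintegral_ofReal hint
      ((ae_restrict_iff' measurableSet_Ioi).2 (Filter.Eventually.of_forall fun t _ => by positivity)),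
    hval]

lemma lintegral_abs_kernel {R : ℝ} (hR : 0 < R) :
    ∫⁻ t in {t : ℝ | R < |t|}, ENNReal.ofReal ((t ^ 2)⁻¹) ≤ ENNReal.ofReal (2 / R) := by
  set f : ℝ → ℝ≥0∞ := fun t => ENNReal.ofReal ((t ^ 2)⁻¹) with hf
  have hset : {t : ℝ | R < |t|} = Iio (-R) ∪ Ioi R := by
    ext t
    simp only [mem_setOf_eq, mem_union, mem_Iio, mem_Ioi, lt_abs, lt_neg]
    tauto
  have hdisj : Disjoint (Iio (-R)) (Ioi R) := by
    rw [Set.disjoint_left]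
    intro a ha hb
    simp only [mem_Iio, mem_Ioi] at ha hb
    linarith
  have hP2 : ∫⁻ t in Iio (-R), f t = ∫⁻ t in Ioi R, f t := by
    have hmeas : Measurable f := (measurable_id.pow_const 2).inv.ennreal_ofReal
    rw [← lintegral_indicator measurableSet_Iio, ← lintegral_indicator measurableSet_Ioi]
    have hneg : ∫⁻ t, (Iio (-R)).indicator f t = ∫⁻ t, (Iio (-R)).indicator f (-t) := by
      have h := lintegral_map_equiv (μ := volume) ((Iio (-R)).indicator f) (MeasurableEquiv.neg ℝ)
      rw [show Measure.map (MeasurableEquiv.neg ℝ) volume = volume from ?_] at h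
      · exact h
      · exact Measure.map_neg_eq_self volume
    rw [hneg]
    congr 1
    funext t
    by_cases h : R < t
    · rw [indicator_of_mem (by simp [mem_Iio]; linarith) f,
        indicator_of_mem (by simpa [mem_Ioi] using h) f]
      simp [hf]
    · rw [indicator_of_notMem (by simp [mem_Iio]; exact not_lt.1 h) f,
        indicator_of_notMem (by simpa [mem_Ioi] using h) f]
  rw [hset, lintegral_union measurableSet_Ioi hdisj, hP2, lintegral_Ioi_inv_sq hR,
    ← ENNReal.ofReal_add (by positivity) (by positivity)]
  apply ENNReal.ofReal_le_ofReal
  rw [← add_div]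
  norm_num

lemma main_estimate (A : ℝ → ℝ) (L : ℝ) (hL : 0 < L)
    (hA : ∀ x₁ x₂ : ℝ, |A x₁ - A x₂| ≤ L * |x₁ - x₂|)
    (p : ℝ) (hp : 1 < p)
    (ε : ℝ) (hε : 0 < ε) (hε2 : ε < 1 / 2)
    (z : ℝ) (hz : z ≠ 0)
    (G : ℝ → ℂ) (hG : Measurable G) :
    (∫⁻ x : ℝ,
        (∫⁻ y in {y : ℝ | ε⁻¹ * |z| < |x - y|},
          (‖cauchyKernel A x y - cauchyKernel A (x + z) y‖₊ : ℝ≥0∞) *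
            (‖G y‖₊ : ℝ≥0∞)) ^ p) ≤
      ENNReal.ofReal ((4 * (1 + L)) ^ p * ε ^ p) *
        ∫⁻ y : ℝ, (‖G y‖₊ : ℝ≥0∞) ^ p := by
  have hp0 : (0 : ℝ) < p := lt_trans one_pos hp
  set q : ℝ := p.conjExponent with hq_def
  have hpq : p.HolderConjugate q := Real.HolderConjugate.conjExponent hp
  have hq0 : 0 < q := hpq.symm.pos
  have hz0 : 0 < |z| := abs_pos.2 hz
  set R : ℝ := ε⁻¹ * |z| with hR_def
  have hR : 0 < R := mul_pos (inv_pos.2 hε) hz0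
  set M : ℝ := 2 * (1 + L) * |z| with hM_def
  have hM0 : (0 : ℝ) ≤ M := by positivity
  set k : ℝ → ℝ≥0∞ := fun t => ENNReal.ofReal ((t ^ 2)⁻¹) with hk_def
  have hk : Measurable k := (measurable_id.pow_const 2).inv.ennreal_ofReal
  have hsetm : MeasurableSet {t : ℝ | R < |t|} :=
    measurableSet_lt measurable_const measurable_id.abs
  set k' : ℝ → ℝ≥0∞ := ({t : ℝ | R < |t|}).indicator k with hk'_def
  have hk' : Measurable k' := hk.indicator hsetm
  have hJ : ∫⁻ t, k' t ≤ ENNReal.ofReal (2 / R) := by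
    rw [hk'_def, lintegral_indicator hsetm]
    exact lintegral_abs_kernel hR
  have hJfin : ∫⁻ t, k' t ≠ ∞ := (lt_of_le_of_lt hJ ENNReal.ofReal_lt_top).ne
  have hGnn : Measurable fun y => (‖G y‖₊ : ℝ≥0∞) := hG.nnnorm.coe_nnreal_ennreal
  have hGp : Measurable fun y => (‖G y‖₊ : ℝ≥0∞) ^ p := hGnn.pow_const p
  set S : ℝ → Set ℝ := fun x => {y : ℝ | R < |x - y|} with hS_def
  have hSm : ∀ x, MeasurableSet (S x) := fun x =>
    measurableSet_lt measurable_const (measurable_const.sub measurable_id).abs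
  -- pointwise kernel bound
  have key : ∀ x : ℝ, ∀ y ∈ S x,
      (‖cauchyKernel A x y - cauchyKernel A (x + z) y‖₊ : ℝ≥0∞) ≤
        ENNReal.ofReal M * k (x - y) := by
    intro x y hy
    have hb := kernel_pointwise hL hA hε hε2 hz (hy : R < |x - y|)
    calc (‖cauchyKernel A x y - cauchyKernel A (x + z) y‖₊ : ℝ≥0∞)
        = ENNReal.ofReal ‖cauchyKernel A x y - cauchyKernel A (x + z) y‖ :=
          (ofReal_norm _).symm
      _ ≤ ENNReal.ofReal (M * ((x - y) ^ 2)⁻¹) := ENNReal.ofReal_le_ofReal hb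
      _ = ENNReal.ofReal M * k (x - y) := ENNReal.ofReal_mul hM0
  -- kernel integral over S x
  have hJx : ∀ x : ℝ, ∫⁻ y in S x, k (x - y) = ∫⁻ t, k' t := by
    intro x
    rw [← lintegral_indicator (hSm x)]
    have hind : ∀ y, (S x).indicator (fun y => k (x - y)) y = k' (x - y) := by
      intro y
      by_cases h : y ∈ S x
      · rw [indicator_of_mem h, hk'_def, indicator_of_mem (by exact h)]
      · rw [indicator_of_notMem h, hk'_def, indicator_of_notMem (by exact h)]
    simp_rw [hind]
    have h2 := lintegral_map_equiv (μ := volume) k' (MeasurableEquiv.subLeft x)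
    rw [show Measure.map (MeasurableEquiv.subLeft x) volume = volume from
      Measure.map_sub_left_eq_self volume x] at h2
    exact h2.symm ▸ rfl
  -- Hölder per x
  have step : ∀ x : ℝ,
      (∫⁻ y in S x,
        (‖cauchyKernel A x y - cauchyKernel A (x + z) y‖₊ : ℝ≥0∞) * (‖G y‖₊ : ℝ≥0∞)) ≤
      ENNReal.ofReal M * (∫⁻ t, k' t) ^ (1 / q) *
        (∫⁻ y, k' (x - y) * (‖G y‖₊ : ℝ≥0∞) ^ p) ^ (1 / p) := by
    intro x
    have h1 : (∫⁻ y in S x,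
        (‖cauchyKernel A x y - cauchyKernel A (x + z) y‖₊ : ℝ≥0∞) * (‖G y‖₊ : ℝ≥0∞)) ≤
        ∫⁻ y in S x, ENNReal.ofReal M * (k (x - y) * (‖G y‖₊ : ℝ≥0∞)) := by
      apply setLIntegral_mono' (hSm x)
      intro y hy
      rw [← mul_assoc]
      exact mul_le_mul_left (key x y hy) _
    rw [lintegral_const_mul' _ _ ENNReal.ofReal_ne_top] at h1
    have hu : Measurable fun y => (k (x - y)) ^ (1 / q) :=
      ((hk.comp (measurable_const.sub measurable_id))).pow_const _
    have hv : Measurable fun y => (k (x - y)) ^ (1 / p) * (‖G y‖₊ : ℝ≥0∞) :=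
      (((hk.comp (measurable_const.sub measurable_id))).pow_const _).mul hGnn
    have hhold := ENNReal.lintegral_mul_le_Lp_mul_Lq (volume.restrict (S x)) hpq.symm
      hu.aemeasurable hv.aemeasurable
    have heq1 : ∀ y : ℝ, (k (x - y)) ^ (1 / q) * ((k (x - y)) ^ (1 / p) * (‖G y‖₊ : ℝ≥0∞)) =
        k (x - y) * (‖G y‖₊ : ℝ≥0∞) := by
      intro y
      rw [← mul_assoc, ← ENNReal.rpow_add_of_nonneg _ _ (by positivity) (by positivity)]
      rw [show 1 / q + 1 / p = 1 from by
        rw [add_comm]; rw [one_div, one_div]; exact hpq.inv_add_inv_eq_one]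
      rw [ENNReal.rpow_one]
    have heq2 : ∀ y : ℝ, ((k (x - y)) ^ (1 / q)) ^ q = k (x - y) := by
      intro y
      rw [← ENNReal.rpow_mul, one_div, inv_mul_cancel₀ hq0.ne', ENNReal.rpow_one]
    have heq3 : ∀ y : ℝ, ((k (x - y)) ^ (1 / p) * (‖G y‖₊ : ℝ≥0∞)) ^ p =
        k (x - y) * (‖G y‖₊ : ℝ≥0∞) ^ p := by
      intro y
      rw [ENNReal.mul_rpow_of_nonneg _ _ hp0.le, ← ENNReal.rpow_mul, one_div,
        inv_mul_cancel₀ hp0.ne', ENNReal.rpow_one]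
    have e1 : (∫⁻ y in S x, k (x - y) * (‖G y‖₊ : ℝ≥0∞)) =
        ∫⁻ y in S x, ((fun y => (k (x - y)) ^ (1 / q)) *
          (fun y => (k (x - y)) ^ (1 / p) * (‖G y‖₊ : ℝ≥0∞))) y :=
      lintegral_congr fun y => (heq1 y).symm
    have e2 : (∫⁻ y in S x, ((k (x - y)) ^ (1 / q)) ^ q) = ∫⁻ y in S x, k (x - y) :=
      lintegral_congr fun y => heq2 y
    have e3 : (∫⁻ y in S x, ((k (x - y)) ^ (1 / p) * (‖G y‖₊ : ℝ≥0∞)) ^ p) =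
        ∫⁻ y in S x, k (x - y) * (‖G y‖₊ : ℝ≥0∞) ^ p :=
      lintegral_congr fun y => heq3 y
    rw [← e1, e2, e3] at hhold
    -- hhold : ∫⁻ y in S x, k (x-y) * ‖G y‖₊ ≤ (∫⁻ y in S x, k (x-y)) ^ (1/q) * (∫⁻ y in S x, k (x-y) * ‖G y‖₊^p) ^ (1/p)
    have hT : ∫⁻ y in S x, k (x - y) * (‖G y‖₊ : ℝ≥0∞) ^ p =
        ∫⁻ y, k' (x - y) * (‖G y‖₊ : ℝ≥0∞) ^ p := by
      rw [← lintegral_indicator (hSm x)]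
      congr 1
      funext y
      by_cases h : y ∈ S x
      · rw [indicator_of_mem h, hk'_def, indicator_of_mem (by exact h)]
      · rw [indicator_of_notMem h, hk'_def, indicator_of_notMem (by exact h), zero_mul]
    calc (∫⁻ y in S x,
          (‖cauchyKernel A x y - cauchyKernel A (x + z) y‖₊ : ℝ≥0∞) * (‖G y‖₊ : ℝ≥0∞)) ≤
        ENNReal.ofReal M * ∫⁻ y in S x, k (x - y) * (‖G y‖₊ : ℝ≥0∞) := h1
      _ ≤ ENNReal.ofReal M * ((∫⁻ y in S x, k (x - y)) ^ (1 / q) *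
          (∫⁻ y in S x, k (x - y) * (‖G y‖₊ : ℝ≥0∞) ^ p) ^ (1 / p)) :=
          mul_le_mul_right hhold _
      _ = ENNReal.ofReal M * (∫⁻ t, k' t) ^ (1 / q) *
          (∫⁻ y, k' (x - y) * (‖G y‖₊ : ℝ≥0∞) ^ p) ^ (1 / p) := by
          rw [hJx x, hT, mul_assoc]
  -- Tonelli
  have hswap : ∫⁻ x, ∫⁻ y, k' (x - y) * (‖G y‖₊ : ℝ≥0∞) ^ p =
      (∫⁻ t, k' t) * ∫⁻ y, (‖G y‖₊ : ℝ≥0∞) ^ p := by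
    rw [lintegral_lintegral_swap
      (((hk'.comp (measurable_fst.sub measurable_snd)).mul
        (hGp.comp measurable_snd)).aemeasurable)]
    have hin : ∀ y : ℝ, ∫⁻ x, k' (x - y) * (‖G y‖₊ : ℝ≥0∞) ^ p =
        (∫⁻ t, k' t) * (‖G y‖₊ : ℝ≥0∞) ^ p := by
      intro y
      rw [lintegral_mul_const _
          (show Measurable fun x : ℝ => k' (x - y) from
            hk'.comp (measurable_id.sub measurable_const)),
        lintegral_sub_right_eq_self k' y]
    simp_rw [hin]
    rw [lintegral_const_mul' _ _ hJfin]
  -- assemble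
  have hcfin : ENNReal.ofReal M ^ p * ((∫⁻ t, k' t) ^ (1 / q)) ^ p ≠ ∞ := by
    apply ENNReal.mul_ne_top
    · exact (ENNReal.rpow_ne_top_of_nonneg hp0.le ENNReal.ofReal_ne_top)
    · exact ENNReal.rpow_ne_top_of_nonneg hp0.le
        (ENNReal.rpow_ne_top_of_nonneg (by positivity) hJfin)
  calc (∫⁻ x : ℝ,
        (∫⁻ y in S x,
          (‖cauchyKernel A x y - cauchyKernel A (x + z) y‖₊ : ℝ≥0∞) *
            (‖G y‖₊ : ℝ≥0∞)) ^ p)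
      ≤ ∫⁻ x, (ENNReal.ofReal M * (∫⁻ t, k' t) ^ (1 / q) *
          (∫⁻ y, k' (x - y) * (‖G y‖₊ : ℝ≥0∞) ^ p) ^ (1 / p)) ^ p :=
        lintegral_mono fun x => ENNReal.rpow_le_rpow (step x) hp0.le
    _ = ∫⁻ x, ENNReal.ofReal M ^ p * ((∫⁻ t, k' t) ^ (1 / q)) ^ p *
          (∫⁻ y, k' (x - y) * (‖G y‖₊ : ℝ≥0∞) ^ p) := by
        congr 1
        funext x
        rw [ENNReal.mul_rpow_of_nonneg _ _ hp0.le, ENNReal.mul_rpow_of_nonneg _ _ hp0.le,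
          ← ENNReal.rpow_mul (∫⁻ y, k' (x - y) * (‖G y‖₊ : ℝ≥0∞) ^ p),
          show 1 / p * p = 1 from by field_simp, ENNReal.rpow_one]
    _ = ENNReal.ofReal M ^ p * ((∫⁻ t, k' t) ^ (1 / q)) ^ p *
          ((∫⁻ t, k' t) * ∫⁻ y, (‖G y‖₊ : ℝ≥0∞) ^ p) := by
        rw [lintegral_const_mul' _ _ hcfin, hswap]
    _ ≤ ENNReal.ofReal M ^ p * ((ENNReal.ofReal (2 / R)) ^ (1 / q)) ^ p *
          ((ENNReal.ofReal (2 / R)) * ∫⁻ y, (‖G y‖₊ : ℝ≥0∞) ^ p) := by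
        gcongr
    _ = (ENNReal.ofReal M * ENNReal.ofReal (2 / R)) ^ p * ∫⁻ y, (‖G y‖₊ : ℝ≥0∞) ^ p := by
        rw [← ENNReal.rpow_mul, ← mul_assoc, mul_assoc (ENNReal.ofReal M ^ p), ← mul_assoc]
        congr 1
        have h2R0 : ENNReal.ofReal (2 / R) ≠ 0 := by
          simp only [ne_eq, ENNReal.ofReal_eq_zero, not_le]
          positivity
        have hexp : 1 / q * p + 1 = p := by
          have h1 : p⁻¹ + q⁻¹ = 1 := hpq.inv_add_inv_eq_one
          have h2 : p⁻¹ * p = 1 := inv_mul_cancel₀ hp0.ne'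
          rw [one_div]
          nlinarith
        rw [ENNReal.mul_rpow_of_nonneg _ _ hp0.le, mul_assoc]
        congr 1
        rw [← ENNReal.rpow_one (ENNReal.ofReal (2 / R)), ← ENNReal.rpow_mul,
          ← ENNReal.rpow_add _ _ h2R0 ENNReal.ofReal_ne_top]
        rw [ENNReal.rpow_one]
        rw [show (1 : ℝ) * (1 / q * p) + 1 = p from by rw [one_mul]; exact hexp]
    _ = ENNReal.ofReal ((4 * (1 + L)) ^ p * ε ^ p) * ∫⁻ y, (‖G y‖₊ : ℝ≥0∞) ^ p := by
        congr 1
        rw [← ENNReal.ofReal_mul hM0]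
        have hMR : M * (2 / R) = 4 * (1 + L) * ε := by
          rw [hM_def, hR_def]
          field_simp
          ring
        rw [hMR, ENNReal.ofReal_rpow_of_pos (by positivity), ← Real.mul_rpow (by positivity) hε.le]

/-- `L^p` estimate for the kernel smoothness term: for `0 < ε < 1/2`, `z ≠ 0` and
`g ∈ L^p(ℝ)`,
`∫ (∫_{|x-y| > ε⁻¹|z|} |K(x,y) - K(x+z,y)| |g(y)| dy)^p dx ≤ C ε^p ‖g‖_{L^p}^p`. -/
theorem kernel_smoothness_Lp_estimate
    (A : ℝ → ℝ) (L : ℝ) (hL : 0 < L)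
    (hA : ∀ x₁ x₂ : ℝ, |A x₁ - A x₂| ≤ L * |x₁ - x₂|)
    (p : ℝ) (hp : 1 < p) :
    ∃ C : ℝ, 0 < C ∧
      ∀ ε : ℝ, 0 < ε → ε < 1 / 2 →
      ∀ z : ℝ, z ≠ 0 →
      ∀ g : ℝ → ℂ, MemLp g (ENNReal.ofReal p) volume →
        (∫⁻ x : ℝ,
            (∫⁻ y in {y : ℝ | ε⁻¹ * |z| < |x - y|},
              (‖cauchyKernel A x y - cauchyKernel A (x + z) y‖₊ : ℝ≥0∞) *
                (‖g y‖₊ : ℝ≥0∞)) ^ p) ≤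
          ENNReal.ofReal (C * ε ^ p) * eLpNorm g (ENNReal.ofReal p) volume ^ p := by
  have hp0 : (0 : ℝ) < p := lt_trans one_pos hp
  refine ⟨(4 * (1 + L)) ^ p, Real.rpow_pos_of_pos (by linarith) p, ?_⟩
  intro ε hε hε2 z hz g hg
  set G : ℝ → ℂ := hg.1.mk g with hG_def
  have hGm : Measurable G := hg.1.stronglyMeasurable_mk.measurable
  have hgG : g =ᵐ[volume] G := hg.1.ae_eq_mk
  have hLHS : (∫⁻ x : ℝ,
        (∫⁻ y in {y : ℝ | ε⁻¹ * |z| < |x - y|},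
          (‖cauchyKernel A x y - cauchyKernel A (x + z) y‖₊ : ℝ≥0∞) *
            (‖g y‖₊ : ℝ≥0∞)) ^ p) =
      (∫⁻ x : ℝ,
        (∫⁻ y in {y : ℝ | ε⁻¹ * |z| < |x - y|},
          (‖cauchyKernel A x y - cauchyKernel A (x + z) y‖₊ : ℝ≥0∞) *
            (‖G y‖₊ : ℝ≥0∞)) ^ p) := by
    apply lintegral_congr
    intro x
    congr 1
    apply lintegral_congr_ae
    exact ae_restrict_of_ae (hgG.mono fun y hy => by simp only []; rw [hy])
  have hpz : ENNReal.ofReal p ≠ 0 := by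
    simp only [ne_eq, ENNReal.ofReal_eq_zero, not_le]; linarith
  have hsn : eLpNorm G (ENNReal.ofReal p) volume ^ p = ∫⁻ y : ℝ, (‖G y‖₊ : ℝ≥0∞) ^ p := by
    rw [eLpNorm_eq_lintegral_rpow_enorm_toReal hpz ENNReal.ofReal_ne_top,
      ENNReal.toReal_ofReal hp0.le, ← ENNReal.rpow_mul,
      show 1 / p * p = 1 from by field_simp, ENNReal.rpow_one]
    rfl
  rw [hLHS, eLpNorm_congr_ae hgG, hsn]
  exact main_estimate A L hL hA p hp ε hε hε2 z hz G hGm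
end
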